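/- For N angles θ_1,…,θ_N and x, φ ∈ ℝ, the modulus of the artifact term satisfies |(1/N) Σ_{n=1}^N e^{i x cos(θ_n - φ)} - J_0(x)| ≤ 1 + |J_0(x)|, and if the θ_n are equispaced (θ_n = 2π(n-1)/N) it is bounded by Σ_{m ≠ 0, N | m} |J_m(x)|. -/

import Mathlib

open Complex Real Filter

noncomputable def besselJ (m : ℤ) (x : ℝ) : ℂ :=
  (1 / (2 * Real.pi)) * ∫ τ in (-Real.pi)..Real.pi,
    Complex.exp (Complex.I * (((x * Real.sin τ - m * τ : ℝ) : ℂ)))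

noncomputable section
variable (x : ℝ)

def jaF (x : ℝ) : ℝ → ℂ := fun t => Complex.exp (Complex.I * ((x : ℂ) * (Real.sin t : ℂ)))

lemma jaF_periodic : Function.Periodic (jaF x) (2 * π) := by
  intro t; simp [jaF, Real.sin_add_two_pi]

instance : Fact (0 < 2 * π) := ⟨by positivity⟩

def jaG (x : ℝ) : AddCircle (2 * π) → ℂ := (jaF_periodic x).lift

lemma jaG_cont : Continuous (jaG x) := by
  have hf : Continuous (jaF x) := by
    exact Complex.continuous_exp.comp (by continuity)
  exact Continuous.quotient_liftOn' hf _


lemma fourierCoeff_jaG (m : ℤ) : fourierCoeff (jaG x) m = besselJ m x := by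
  rw [fourierCoeff_eq_intervalIntegral _ m (-π), besselJ]
  have : -π + 2 * π = π := by ring
  rw [this]
  rw [Complex.real_smul]
  push_cast
  congr 1
  apply intervalIntegral.integral_congr
  intro t _
  show (fourier (-m)) (t : AddCircle (2*π)) • jaG x (t : AddCircle (2*π)) = _
  rw [smul_eq_mul]
  have : jaG x (t : AddCircle (2*π)) = jaF x t := (jaF_periodic x).lift_coe t
  rw [this]
  rw [fourier_coe_apply]
  unfold jaF
  rw [← Complex.exp_add]
  push_cast
  congr 1
  have hπ : (π : ℂ) ≠ 0 := by exact_mod_cast Real.pi_ne_zero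
  field_simp
  ring

def jaF1 (x : ℝ) : ℝ → ℂ := fun t => Complex.I * x * Real.cos t * jaF x t
def jaF2 (x : ℝ) : ℝ → ℂ :=
  fun t => Complex.I * x * Real.cos t * jaF1 x t - Complex.I * x * Real.sin t * jaF x t

lemma jaF_hasDeriv (t : ℝ) : HasDerivAt (jaF x) (jaF1 x t) t := by
  have h1 : HasDerivAt (fun t : ℝ => Complex.I * ((x : ℂ) * (Real.sin t : ℂ)))
      (Complex.I * (x * Real.cos t)) t := by
    have := ((Real.hasDerivAt_sin t).ofReal_comp.const_mul (x : ℂ)).const_mul Complex.I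
    simpa using this
  have := h1.cexp
  unfold jaF1
  refine this.congr_deriv ?_
  unfold jaF
  push_cast
  ring

lemma jaF1_hasDeriv (t : ℝ) : HasDerivAt (jaF1 x) (jaF2 x t) t := by
  have hc : HasDerivAt (fun t : ℝ => Complex.I * (x : ℂ) * (Real.cos t : ℂ))
      (Complex.I * x * (-Real.sin t)) t := by
    have := ((Real.hasDerivAt_cos t).ofReal_comp).const_mul (Complex.I * (x : ℂ))
    simpa using this
  have := hc.mul (jaF_hasDeriv x t)
  unfold jaF1 jaF2
  refine this.congr_deriv ?_
  push_cast
  ring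

lemma jaF_cont : Continuous (jaF x) := Complex.continuous_exp.comp (by continuity)
lemma jaF1_cont : Continuous (jaF1 x) := by
  unfold jaF1; exact (by continuity : Continuous fun t : ℝ => Complex.I * x * (Real.cos t : ℂ)).mul (jaF_cont x)
lemma jaF2_cont : Continuous (jaF2 x) := by
  unfold jaF2
  apply Continuous.sub
  · exact (by continuity : Continuous fun t : ℝ => Complex.I * x * (Real.cos t : ℂ)).mul (jaF1_cont x)
  · exact (by continuity : Continuous fun t : ℝ => Complex.I * x * (Real.sin t : ℂ)).mul (jaF_cont x)

lemma jaF_norm (t : ℝ) : ‖jaF x t‖ = 1 := by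
  simp only [jaF]
  rw [show (x:ℂ) * (Real.sin t : ℂ) = ((x * Real.sin t : ℝ) : ℂ) by push_cast; ring]
  exact Complex.norm_exp_I_mul_ofReal _

lemma jaF1_norm (t : ℝ) : ‖jaF1 x t‖ ≤ |x| := by
  unfold jaF1
  rw [norm_mul, jaF_norm, mul_one, norm_mul, norm_mul]
  simp only [Complex.norm_I, one_mul, Complex.norm_real, Real.norm_eq_abs]
  calc |x| * |Real.cos t| ≤ |x| * 1 := by
        exact mul_le_mul_of_nonneg_left (Real.abs_cos_le_one t) (abs_nonneg x)
    _ = |x| := mul_one _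

lemma jaF2_norm (t : ℝ) : ‖jaF2 x t‖ ≤ x ^ 2 + |x| := by
  unfold jaF2
  apply (norm_sub_le _ _).trans
  gcongr
  · calc ‖Complex.I * x * Real.cos t * jaF1 x t‖ ≤ |x| * |x| := by
          rw [norm_mul]
          apply mul_le_mul _ (jaF1_norm x t) (norm_nonneg _) (abs_nonneg x)
          rw [norm_mul, norm_mul]
          simp only [Complex.norm_I, one_mul, Complex.norm_real, Real.norm_eq_abs]
          exact (mul_le_mul_of_nonneg_left (Real.abs_cos_le_one t) (abs_nonneg x)).trans (le_of_eq (mul_one _))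
      _ = x ^ 2 := by rw [← abs_mul, ← sq, abs_sq]
  · rw [norm_mul, jaF_norm, mul_one, norm_mul, norm_mul]
    simp only [Complex.norm_I, one_mul, Complex.norm_real, Real.norm_eq_abs]
    exact (mul_le_mul_of_nonneg_left (Real.abs_sin_le_one t) (abs_nonneg x)).trans (le_of_eq (mul_one _))

lemma hab_pi : (-π : ℝ) < π := by linarith [Real.pi_pos]

lemma fourierCoeffOn_jaF (m : ℤ) : fourierCoeffOn hab_pi (jaF x) m = besselJ m x := by
  rw [fourierCoeffOn_eq_integral, besselJ, Complex.real_smul]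
  push_cast
  congr 1
  · have hπ : (π : ℂ) ≠ 0 := by exact_mod_cast Real.pi_ne_zero
    rw [show ((π:ℂ) - -π) = 2 * π by ring]
  apply intervalIntegral.integral_congr
  intro t _
  show (fourier (-m)) (t : AddCircle (π - -π)) • jaF x t = _
  rw [smul_eq_mul, fourier_coe_apply]
  unfold jaF
  rw [← Complex.exp_add]
  push_cast
  congr 1
  have hπ : (π : ℂ) ≠ 0 := by exact_mod_cast Real.pi_ne_zero
  have : ((π : ℂ) - -π) = 2 * π := by ring
  rw [this]
  field_simp
  ring

lemma coeffOn_norm_le (g : ℝ → ℂ) (C : ℝ) (hg : ∀ t, ‖g t‖ ≤ C) (m : ℤ) :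
    ‖fourierCoeffOn hab_pi g m‖ ≤ C := by
  have hC : 0 ≤ C := le_trans (norm_nonneg _) (hg 0)
  rw [fourierCoeffOn_eq_integral, norm_smul]
  have hp : (0:ℝ) < π - -π := by linarith [Real.pi_pos]
  have h1 : ‖(1 / (π - -π) : ℝ)‖ = 1 / (2 * π) := by
    rw [Real.norm_eq_abs, abs_of_pos (by positivity)]
    have := Real.pi_ne_zero
    field_simp
    ring
  rw [h1]
  have h2 : ‖∫ t in (-π)..π, (fourier (-m)) (t : AddCircle (π - -π)) • g t‖ ≤ C * |π - -π| := by
    apply intervalIntegral.norm_integral_le_of_norm_le_const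
    intro t _
    rw [norm_smul]
    calc ‖(fourier (-m)) (t : AddCircle (π - -π))‖ * ‖g t‖ ≤ 1 * C := by
          apply mul_le_mul _ (hg t) (norm_nonneg _) zero_le_one
          rw [fourier_apply]
          exact le_of_eq (Circle.norm_coe _)
      _ = C := one_mul C
  calc 1 / (2*π) * ‖∫ t in (-π)..π, (fourier (-m)) (t : AddCircle (π - -π)) • g t‖
      ≤ 1 / (2*π) * (C * |π - -π|) := by
        apply mul_le_mul_of_nonneg_left h2 (by positivity)
    _ = C := by
        rw [abs_of_pos hp, show (π:ℝ) - -π = 2 * π by ring]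
        have := Real.pi_ne_zero
        have h2π : (2 * π : ℝ) ≠ 0 := by positivity
        field_simp

lemma jaF_pi_eq : jaF x π = jaF x (-π) := by
  unfold jaF
  rw [Real.sin_pi, Real.sin_neg, Real.sin_pi]
  norm_num

lemma jaF1_pi_eq : jaF1 x π = jaF1 x (-π) := by
  unfold jaF1
  rw [jaF_pi_eq, Real.cos_neg]

lemma coeff_step (g g' : ℝ → ℂ) (hD : ∀ t, HasDerivAt g (g' t) t) (hc : Continuous g')
    (hbd : g π = g (-π)) (m : ℤ) (hm : m ≠ 0) :
    ‖fourierCoeffOn hab_pi g m‖ = ‖fourierCoeffOn hab_pi g' m‖ / |(m : ℝ)| := by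
  rw [fourierCoeffOn_of_hasDerivAt hab_pi hm (fun t _ => hD t)
    (hc.intervalIntegrable _ _)]
  rw [hbd, sub_self, mul_zero, zero_sub, norm_mul, norm_neg, norm_mul]
  have h1 : ‖(1 / (-2 * ↑π * I * (m:ℂ)) : ℂ)‖ = 1 / (2 * π * |(m:ℝ)|) := by
    rw [norm_div, norm_one, norm_mul, norm_mul, norm_mul, norm_neg]
    simp only [Complex.norm_I, Complex.norm_two, Complex.norm_real, Real.norm_eq_abs,
      Complex.norm_intCast, mul_one]
    rw [abs_of_pos Real.pi_pos]
  rw [h1]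
  have h2 : ‖((π:ℂ) - ((-π : ℝ):ℂ))‖ = 2 * π := by
    rw [show ((π:ℂ) - ((-π : ℝ):ℂ)) = ((2 * π : ℝ) : ℂ) by push_cast; ring]
    rw [Complex.norm_real, Real.norm_eq_abs, abs_of_pos (by positivity)]
  rw [h2]
  have hmp : (0:ℝ) < |(m:ℝ)| := by
    simp only [abs_pos]
    exact_mod_cast hm
  have hπ := Real.pi_pos
  field_simp

lemma coeff_bound (m : ℤ) (hm : m ≠ 0) :
    ‖fourierCoeff (jaG x) m‖ ≤ (x ^ 2 + |x|) / (m : ℝ) ^ 2 := by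
  have e0 : fourierCoeff (jaG x) m = fourierCoeffOn hab_pi (jaF x) m := by
    rw [fourierCoeff_jaG, fourierCoeffOn_jaF]
  rw [e0, coeff_step (jaF x) (jaF1 x) (jaF_hasDeriv x) (jaF1_cont x) (jaF_pi_eq x) m hm,
    coeff_step (jaF1 x) (jaF2 x) (jaF1_hasDeriv x) (jaF2_cont x) (jaF1_pi_eq x) m hm]
  have h2 := coeffOn_norm_le (jaF2 x) (x ^ 2 + |x|) (jaF2_norm x) m
  have hmp : (0:ℝ) < |(m:ℝ)| := by
    simp only [abs_pos]
    exact_mod_cast hm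
  rw [div_div, ← abs_mul, ← sq, _root_.abs_of_nonneg (sq_nonneg ((m:ℝ)))]
  gcongr

lemma summable_norm_coeff : Summable (fun m : ℤ => ‖fourierCoeff (jaG x) m‖) := by
  have hg : Summable (fun m : ℤ => (x ^ 2 + |x|) * (1 / (m:ℝ) ^ 2)) :=
    (Real.summable_one_div_int_pow.mpr one_lt_two).mul_left _
  apply Summable.of_norm_bounded_eventually hg
  rw [Filter.eventually_cofinite]
  have hfin : ({0} : Set ℤ).Finite := Set.finite_singleton 0
  apply Set.Finite.subset hfin
  intro m hm
  simp only [Set.mem_compl_iff, Set.mem_setOf_eq, not_le, norm_norm] at hm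
  by_contra h0
  simp only [Set.mem_singleton_iff] at h0
  have := coeff_bound x m h0
  rw [div_eq_mul_one_div] at this
  exact absurd this (not_le.mpr hm)

lemma summable_coeff : Summable (fourierCoeff (jaG x)) := by
  apply Summable.of_norm_bounded (summable_norm_coeff x) (fun m => le_refl _)

lemma root_sum (N : ℕ) (hN : 1 ≤ N) (m : ℤ) :
    ∑ n : Fin N, Complex.exp (2 * π * Complex.I * m * n / N) =
      if (N:ℤ) ∣ m then (N:ℂ) else 0 := by
  have hNC : (N:ℂ) ≠ 0 := Nat.cast_ne_zero.mpr (by omega)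
  have hterm : ∀ n : ℕ, Complex.exp (2 * π * Complex.I * m * n / N) =
      Complex.exp (2 * π * Complex.I * m / N) ^ n := by
    intro n
    rw [← Complex.exp_nat_mul]
    congr 1
    ring
  by_cases hdvd : (N:ℤ) ∣ m
  · obtain ⟨k, hk⟩ := hdvd
    rw [if_pos ⟨k, hk⟩]
    have h1 : ∀ n : Fin N, Complex.exp (2 * π * Complex.I * m * n / N) = 1 := by
      intro n
      rw [hterm n]
      have : (2 * (π:ℂ) * Complex.I * m / N) = k * (2 * π * Complex.I) := by
        rw [hk]; push_cast; field_simp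
      rw [this, Complex.exp_int_mul_two_pi_mul_I, one_pow]
    rw [Finset.sum_congr rfl (fun n _ => h1 n)]
    simp
  · rw [if_neg hdvd]
    set ζ := Complex.exp (2 * π * Complex.I * m / N) with hζ
    have hζN : ζ ^ N = 1 := by
      rw [← Complex.exp_nat_mul]
      have : (N:ℂ) * (2 * π * Complex.I * m / N) = m * (2 * π * Complex.I) := by
        field_simp
      rw [this, Complex.exp_int_mul_two_pi_mul_I]
    have hζ1 : ζ ≠ 1 := by
      intro h
      rw [hζ, Complex.exp_eq_one_iff] at h
      obtain ⟨j, hj⟩ := h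
      apply hdvd
      refine ⟨j, ?_⟩
      have h2πI : (2 * (π:ℂ) * Complex.I) ≠ 0 := by
        simp [Complex.I_ne_zero, Complex.ofReal_ne_zero, Real.pi_ne_zero]
      have key : (2*(π:ℂ)*Complex.I) * m = (2*π*Complex.I) * (j*N) := by
        have h2 := congrArg (fun z => z * (N:ℂ)) hj
        rw [div_mul_cancel₀ _ hNC] at h2
        linear_combination h2
      have hmj : (m : ℂ) = ((N * j : ℤ) : ℂ) := by
        push_cast
        have := mul_left_cancel₀ h2πI key
        rw [this]; ring
      exact_mod_cast hmj
    calc ∑ n : Fin N, Complex.exp (2 * π * Complex.I * m * n / N)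
        = ∑ n ∈ Finset.range N, ζ ^ n := by
          rw [← Fin.sum_univ_eq_sum_range (fun n => ζ ^ n) N]
          exact Finset.sum_congr rfl (fun n _ => hterm n)
      _ = (ζ ^ N - 1) / (ζ - 1) := geom_sum_eq hζ1 N
      _ = 0 := by rw [hζN, sub_self, zero_div]

lemma fourier_2pi (m : ℤ) (t : ℝ) :
    (fourier m) ((t : ℝ) : AddCircle (2 * π)) = Complex.exp (Complex.I * m * t) := by
  rw [fourier_coe_apply]
  congr 1
  have hπ : (π : ℂ) ≠ 0 := by exact_mod_cast Real.pi_ne_zero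
  field_simp
  push_cast
  ring

lemma aliasing (N : ℕ) (hN : 1 ≤ N) (s : ℝ) :
    HasSum
      (fun m : ℤ => if (N:ℤ) ∣ m then
          fourierCoeff (jaG x) m * Complex.exp (Complex.I * m * s) else 0)
      ((1 / (N:ℂ)) * ∑ n : Fin N, jaF x (2 * π * n / N + s)) := by
  have hNC : (N:ℂ) ≠ 0 := Nat.cast_ne_zero.mpr (by omega)
  have hpt : ∀ n : Fin N,
      HasSum (fun m : ℤ => fourierCoeff (jaG x) m •
          (fourier m) (((2 * π * n / N + s : ℝ)) : AddCircle (2 * π)))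
        (jaF x (2 * π * n / N + s)) := by
    intro n
    have := has_pointwise_sum_fourier_series_of_summable
      (f := ⟨jaG x, jaG_cont x⟩) (summable_coeff x)
      (((2 * π * n / N + s : ℝ)) : AddCircle (2 * π))
    exact this
  have hsum := (hasSum_sum (s := Finset.univ) (fun n _ => hpt n)).mul_left (1 / (N:ℂ))
  convert hsum using 2 with m
  · rfl
  rw [Finset.mul_sum]
  have hterm : ∀ n : Fin N,
      (fourier m) (((2 * π * n / N + s : ℝ)) : AddCircle (2 * π)) =
        Complex.exp (Complex.I * m * s) * Complex.exp (2 * π * Complex.I * m * n / N) := by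
    intro n
    rw [fourier_2pi, ← Complex.exp_add]
    congr 1
    push_cast
    field_simp
    ring
  have : ∀ n : Fin N, 1 / (N:ℂ) * (fourierCoeff (jaG x) m •
      (fourier m) (((2 * π * n / N + s : ℝ)) : AddCircle (2 * π))) =
      (fourierCoeff (jaG x) m * Complex.exp (Complex.I * m * s) / N) *
        Complex.exp (2 * π * Complex.I * m * n / N) := by
    intro n
    rw [hterm n, smul_eq_mul]
    field_simp
  rw [Finset.sum_congr rfl (fun n _ => this n), ← Finset.mul_sum, root_sum N hN m]
  by_cases hdvd : (N:ℤ) ∣ m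
  · rw [if_pos hdvd, if_pos hdvd]
    field_simp
  · rw [if_neg hdvd, if_neg hdvd, mul_zero]

theorem dsm_artifact_bound (N : ℕ) (hN : 1 ≤ N) (x φ : ℝ) :
    (∀ θ : Fin N → ℝ,
      ‖(1 / (N : ℂ)) * ∑ n : Fin N,
              Complex.exp (Complex.I * ((x * Real.cos (θ n - φ) : ℝ) : ℂ)) -
            besselJ 0 x‖ ≤ 1 + ‖besselJ 0 x‖) ∧
    ‖(1 / (N : ℂ)) * ∑ n : Fin N,
            Complex.exp (Complex.I *
              ((x * Real.cos (2 * Real.pi * (n : ℝ) / N - φ) : ℝ) : ℂ)) -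
          besselJ 0 x‖ ≤
      ∑' m : {m : ℤ // m ≠ 0 ∧ (N : ℤ) ∣ m}, ‖besselJ m x‖ := by
  have hNR : (0:ℝ) < N := by exact_mod_cast hN
  constructor
  · -- part 1
    intro θ
    have habs1 : ∀ r : ℝ, ‖Complex.exp (Complex.I * (r : ℂ))‖ = 1 := by
      intro r
      rw [Complex.norm_exp]
      simp
    calc ‖(1 / (N : ℂ)) * ∑ n : Fin N,
            Complex.exp (Complex.I * ((x * Real.cos (θ n - φ) : ℝ) : ℂ)) - besselJ 0 x‖
        ≤ ‖(1 / (N : ℂ)) * ∑ n : Fin N,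
            Complex.exp (Complex.I * ((x * Real.cos (θ n - φ) : ℝ) : ℂ))‖ +
          ‖besselJ 0 x‖ := by
          exact norm_sub_le _ _
      _ ≤ 1 + ‖besselJ 0 x‖ := by
          gcongr
          rw [norm_mul]
          have h1 : ‖1 / (N : ℂ)‖ = 1 / (N : ℝ) := by
            rw [norm_div, norm_one]
            simp
          rw [h1]
          have h2 : ‖∑ n : Fin N,
              Complex.exp (Complex.I * ((x * Real.cos (θ n - φ) : ℝ) : ℂ))‖ ≤ (N : ℝ) := by
            calc ‖∑ n : Fin N, Complex.exp (Complex.I * ((x * Real.cos (θ n - φ) : ℝ) : ℂ))‖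
                ≤ ∑ n : Fin N, ‖Complex.exp (Complex.I * ((x * Real.cos (θ n - φ) : ℝ) : ℂ))‖ :=
                  by exact norm_sum_le _ _
              _ = ∑ _n : Fin N, (1:ℝ) := by
                  exact Finset.sum_congr rfl (fun n _ => habs1 _)
              _ = (N : ℝ) := by simp
          calc (1 / (N:ℝ)) * ‖∑ n : Fin N,
                Complex.exp (Complex.I * ((x * Real.cos (θ n - φ) : ℝ) : ℂ))‖
              ≤ (1 / (N:ℝ)) * N := by gcongr
            _ = 1 := by field_simp
  · -- part 2
    set s : ℝ := π / 2 - φ with hs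
    set c : ℤ → ℂ := fourierCoeff (jaG x) with hc
    set h : ℤ → ℂ := fun m => if (N:ℤ) ∣ m then c m * Complex.exp (Complex.I * m * s) else 0
      with hh
    have hA : (∑ n : Fin N, Complex.exp (Complex.I *
          ((x * Real.cos (2 * Real.pi * (n : ℝ) / N - φ) : ℝ) : ℂ))) =
        ∑ n : Fin N, jaF x (2 * π * n / N + s) := by
      apply Finset.sum_congr rfl
      intro n _
      unfold jaF
      congr 2
      rw [hs, show 2 * π * (n:ℝ) / N + (π/2 - φ) = (2 * π * (n:ℝ) / N - φ) + π/2 by ring,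
        Real.sin_add_pi_div_two]
      push_cast
      ring
    have hS := aliasing x N hN s
    rw [← hA] at hS
    have hnorm_exp : ∀ m : ℤ, ‖Complex.exp (Complex.I * m * s)‖ = 1 := by
      intro m
      rw [Complex.norm_exp]
      simp
    have hh0 : h 0 = besselJ 0 x := by
      rw [hh]
      simp only [dvd_zero, if_true, Int.cast_zero, mul_zero, zero_mul, Complex.exp_zero, mul_one]
      rw [hc, fourierCoeff_jaG]
    have hupd := hS.update 0 0
    have hval : (0 : ℂ) - h 0 + ((1 / (N:ℂ)) * ∑ n : Fin N, Complex.exp (Complex.I *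
          ((x * Real.cos (2 * Real.pi * (n : ℝ) / N - φ) : ℝ) : ℂ))) =
        ((1 / (N:ℂ)) * ∑ n : Fin N, Complex.exp (Complex.I *
          ((x * Real.cos (2 * Real.pi * (n : ℝ) / N - φ) : ℝ) : ℂ))) - besselJ 0 x := by
      rw [hh0]; ring
    rw [hval] at hupd
    have hbound : ∀ m : ℤ, ‖Function.update h 0 0 m‖ ≤ ‖c m‖ := by
      intro m
      by_cases hm : m = 0
      · subst hm
        simp only [Function.update_self, norm_zero]
        exact norm_nonneg _
      · rw [Function.update_of_ne hm]
        rw [hh]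
        by_cases hdvd : (N:ℤ) ∣ m
        · simp only [if_pos hdvd]
          rw [norm_mul]
          rw [hnorm_exp, mul_one]
        · simp only [if_neg hdvd, norm_zero]
          exact norm_nonneg _
    have hsummable : Summable (fun m : ℤ => ‖Function.update h 0 0 m‖) :=
      Summable.of_nonneg_of_le (fun m => norm_nonneg _) hbound (summable_norm_coeff x)
    calc ‖(1 / (N:ℂ)) * ∑ n : Fin N, Complex.exp (Complex.I *
            ((x * Real.cos (2 * Real.pi * (n : ℝ) / N - φ) : ℝ) : ℂ)) - besselJ 0 x‖
        = ‖∑' m : ℤ, Function.update h 0 0 m‖ := by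
          rw [hupd.tsum_eq]
      _ ≤ ∑' m : ℤ, ‖Function.update h 0 0 m‖ := norm_tsum_le_tsum_norm hsummable
      _ = ∑' m : {m : ℤ // m ≠ 0 ∧ (N : ℤ) ∣ m}, ‖Function.update h 0 0 m‖ := by
          refine (tsum_subtype_eq_of_support_subset ?_).symm
          intro m hm
          simp only [Function.mem_support] at hm
          constructor
          · intro h0; subst h0; simp at hm
          · by_contra hdvd
            apply hm
            rw [Function.update_of_ne (by rintro rfl; exact hdvd (dvd_zero _)), hh]
            simp only [if_neg hdvd, norm_zero]
      _ = ∑' m : {m : ℤ // m ≠ 0 ∧ (N : ℤ) ∣ m}, ‖besselJ m x‖ := by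
          apply tsum_congr
          rintro ⟨m, hm0, hdvd⟩
          rw [Function.update_of_ne hm0, hh]
          simp only [if_pos hdvd]
          rw [norm_mul, hnorm_exp, mul_one,
            hc, fourierCoeff_jaG]
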